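/- Let μ be a probability measure on a measurable space Ω and let A, B, C be pairwise disjoint measurable sets with A ∪ B ∪ C = Ω and μ(A) > 0. Let T be a measurable set with μ(T) > 0 and μ[T | A] > 0, and let ε be real. Assume μ(T ∩ B) ≥ exp(−2ε)·μ[T | A]·μ(B) and μ(T ∩ C) ≥ exp(−ε)·μ[T | A]·μ(C). Then μ[A | T] / μ(A) ≤ 1 / (μ(A) + exp(−2ε)·μ(B) + exp(−ε)·μ(C)). -/
import Mathlib


open MeasureTheory

/-- Conditional probability `μ[A | B] = μ(A ∩ B) / μ(B)` as a real number. -/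
noncomputable def condP {Ω : Type*} [MeasurableSpace Ω] (μ : Measure Ω) (A B : Set Ω) : ℝ :=
  (μ (A ∩ B)).toReal / (μ B).toReal

theorem stmt_3 {Ω : Type*} [MeasurableSpace Ω] (μ : Measure Ω) [IsProbabilityMeasure μ]
    (A B C T : Set Ω)
    (hA : MeasurableSet A) (hB : MeasurableSet B) (hC : MeasurableSet C)
    (hT : MeasurableSet T)
    (hAB : Disjoint A B) (hAC : Disjoint A C) (hBC : Disjoint B C)
    (hUnion : A ∪ B ∪ C = Set.univ)
    (hA0 : 0 < (μ A).toReal) (hT0 : 0 < (μ T).toReal) (hTA : 0 < condP μ T A)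
    (ε : ℝ)
    (h1 : Real.exp (-(2*ε)) * condP μ T A * (μ B).toReal ≤ (μ (T ∩ B)).toReal)
    (h2 : Real.exp (-ε) * condP μ T A * (μ C).toReal ≤ (μ (T ∩ C)).toReal) :
    condP μ A T / (μ A).toReal ≤
      1 / ((μ A).toReal + Real.exp (-(2*ε)) * (μ B).toReal + Real.exp (-ε) * (μ C).toReal) := by
  set a := (μ A).toReal with ha
  set b := (μ B).toReal with hb
  set c := (μ C).toReal with hc
  set tA := (μ (T ∩ A)).toReal with htA
  set tB := (μ (T ∩ B)).toReal with htB
  set tC := (μ (T ∩ C)).toReal with htC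
  set r := condP μ T A with hr
  have hrdef : r = tA / a := rfl
  have hb0 : 0 ≤ b := ENNReal.toReal_nonneg
  have hc0 : 0 ≤ c := ENNReal.toReal_nonneg
  -- decomposition of μ T
  have hTsum : (μ T).toReal = tA + tB + tC := by
    have hTeq : T = (T ∩ A) ∪ (T ∩ B) ∪ (T ∩ C) := by
      rw [← Set.inter_union_distrib_left, ← Set.inter_union_distrib_left, hUnion,
        Set.inter_univ]
    have hd1 : Disjoint (T ∩ A) (T ∩ B) := (hAB.mono Set.inter_subset_right Set.inter_subset_right)
    have hd2 : Disjoint ((T ∩ A) ∪ (T ∩ B)) (T ∩ C) := by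
      refine Set.disjoint_union_left.2 ⟨?_, ?_⟩
      · exact hAC.mono Set.inter_subset_right Set.inter_subset_right
      · exact hBC.mono Set.inter_subset_right Set.inter_subset_right
    have heq : μ T = μ (T ∩ A) + μ (T ∩ B) + μ (T ∩ C) := by
      calc μ T = μ ((T ∩ A) ∪ (T ∩ B) ∪ (T ∩ C)) := by rw [← hTeq]
        _ = μ ((T ∩ A) ∪ (T ∩ B)) + μ (T ∩ C) := measure_union hd2 (hT.inter hC)
        _ = μ (T ∩ A) + μ (T ∩ B) + μ (T ∩ C) := by
            rw [measure_union hd1 (hT.inter hB)]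
    rw [heq, ENNReal.toReal_add (ENNReal.add_ne_top.2
        ⟨measure_ne_top _ _, measure_ne_top _ _⟩) (measure_ne_top _ _),
      ENNReal.toReal_add (measure_ne_top _ _) (measure_ne_top _ _)]
  have hD : 0 < a + Real.exp (-(2*ε)) * b + Real.exp (-ε) * c := by
    have := Real.exp_pos (-(2*ε)); have := Real.exp_pos (-ε); positivity
  have hTge : r * (a + Real.exp (-(2*ε)) * b + Real.exp (-ε) * c) ≤ (μ T).toReal := by
    rw [hTsum]
    have htAeq : r * a = tA := by
      rw [hrdef]; field_simp
    calc r * (a + Real.exp (-(2*ε)) * b + Real.exp (-ε) * c)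
        = r * a + Real.exp (-(2*ε)) * r * b + Real.exp (-ε) * r * c := by ring
      _ ≤ tA + tB + tC := by
          rw [htAeq]; exact add_le_add (add_le_add le_rfl h1) h2
  have hAT : (μ (A ∩ T)).toReal = tA := by rw [Set.inter_comm]
  rw [condP, hAT, div_div]
  rw [div_le_div_iff₀ (by positivity) hD]
  have hrtA : tA = r * a := by rw [hrdef]; field_simp
  calc tA * (a + Real.exp (-(2*ε)) * b + Real.exp (-ε) * c)
      = (r * (a + Real.exp (-(2*ε)) * b + Real.exp (-ε) * c)) * a := by rw [hrtA]; ring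
    _ ≤ (μ T).toReal * a := by
        exact mul_le_mul_of_nonneg_right hTge (le_of_lt hA0)
    _ = 1 * ((μ T).toReal * a) := by ring
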